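/- Let n ≥ 2, let a_1, …, a_n be reals, and let A be the n×n symmetric anti-bidiagonal matrix with A_{i,j} = a_{|i−j|+1} when i+j = n+1 or i+j = n+2, and A_{i,j} = 0 otherwise (indices 1-based). Then for every q ≥ 1: (a) the (i,j) entry of A^{2q−1} is zero whenever 2 ≤ i+j ≤ n−q+1; (b) the (i,j) entry of A^{2q} is zero whenever 1+q ≤ j−i ≤ n−1; (c) (A^{2q−1})_{1, n−q+1} = a_n·a_{n−1}⋯a_{n−2q+2} for 1 ≤ q ≤ ⌊(n+1)/2⌋, and (A^{2q})_{1, 1+q} = a_n·a_{n−1}⋯a_{n−2q+1} for 1 ≤ q ≤ ⌊n/2⌋. -/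
import Mathlib


/-- Pattern of powers of a symmetric anti-bidiagonal matrix `A` (1-based
entries `A_{i,j} = a_{|i-j|+1}` when `i+j = n+1` or `i+j = n+2`, zero
otherwise; here realized 0-based over `Fin n`):
(a) `(A^{2q-1})_{i,j} = 0` whenever `2 ≤ i+j ≤ n-q+1` (1-based);
(b) `(A^{2q})_{i,j} = 0` whenever `1+q ≤ j-i ≤ n-1` (1-based);
(c) `(A^{2q-1})_{1,n-q+1} = a_n a_{n-1} ⋯ a_{n-2q+2}` for `1 ≤ q ≤ ⌊(n+1)/2⌋`,
and `(A^{2q})_{1,1+q} = a_n a_{n-1} ⋯ a_{n-2q+1}` for `1 ≤ q ≤ ⌊n/2⌋`. -/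
theorem stmt_18 (n : ℕ) (hn : 2 ≤ n) (a : ℕ → ℝ)
    (A : Matrix (Fin n) (Fin n) ℝ)
    (hA : ∀ i j : Fin n,
      A i j = if (i : ℕ) + (j : ℕ) = n - 1 ∨ (i : ℕ) + (j : ℕ) = n
        then a (Nat.dist (i : ℕ) (j : ℕ) + 1) else 0) :
    (∀ q : ℕ, 1 ≤ q → ∀ i j : Fin n,
      (i : ℕ) + (j : ℕ) + 2 ≤ n - q + 1 → (A ^ (2 * q - 1)) i j = 0) ∧
    (∀ q : ℕ, 1 ≤ q → ∀ i j : Fin n,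
      (i : ℕ) + q + 1 ≤ (j : ℕ) → (A ^ (2 * q)) i j = 0) ∧
    (∀ q : ℕ, (hq1 : 1 ≤ q) → (hq2 : q ≤ (n + 1) / 2) →
      (A ^ (2 * q - 1)) ⟨0, by omega⟩ ⟨n - q, by omega⟩ =
        ∏ i ∈ Finset.range (2 * q - 1), a (n - i)) ∧
    (∀ q : ℕ, (hq1 : 1 ≤ q) → (hq2 : q ≤ n / 2) →
      (A ^ (2 * q)) ⟨0, by omega⟩ ⟨q, by omega⟩ =
        ∏ i ∈ Finset.range (2 * q), a (n - i)) := by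
  have hAz : ∀ i j : Fin n, (i:ℕ)+(j:ℕ) ≠ n-1 → (i:ℕ)+(j:ℕ) ≠ n → A i j = 0 := by
    intro i j h1 h2
    rw [hA]; simp [h1, h2]
  have hAv : ∀ i j : Fin n, ((i:ℕ)+(j:ℕ) = n-1 ∨ (i:ℕ)+(j:ℕ) = n) →
      A i j = a (Nat.dist (i:ℕ) (j:ℕ) + 1) := by
    intro i j h
    rw [hA, if_pos h]
  -- (a) reindexed: odd powers
  have key : ∀ q : ℕ, ∀ i j : Fin n, (i:ℕ)+(j:ℕ)+q+2 ≤ n → (A ^ (2*q+1)) i j = 0 := by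
    intro q
    induction q with
    | zero =>
      intro i j h
      rw [show 2*0+1 = 1 from rfl, pow_one]
      exact hAz i j (by omega) (by omega)
    | succ q ih =>
      have even : ∀ i j : Fin n, (i:ℕ)+q+2 ≤ (j:ℕ) → (A ^ (2*q+2)) i j = 0 := by
        intro i j h
        rw [show 2*q+2 = (2*q+1)+1 from rfl, pow_succ, Matrix.mul_apply]
        apply Finset.sum_eq_zero
        intro k _
        by_cases hk : (k:ℕ)+(j:ℕ) = n-1 ∨ (k:ℕ)+(j:ℕ) = n
        · have hj : (j:ℕ) < n := j.isLt
          rw [ih i k (by omega), zero_mul]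
        · push_neg at hk
          rw [hAz k j hk.1 hk.2, mul_zero]
      intro i j h
      rw [show 2*(q+1)+1 = (2*q+2)+1 by ring, pow_succ, Matrix.mul_apply]
      apply Finset.sum_eq_zero
      intro k _
      by_cases hk : (k:ℕ)+(j:ℕ) = n-1 ∨ (k:ℕ)+(j:ℕ) = n
      · rw [even i k (by omega), zero_mul]
      · push_neg at hk
        rw [hAz k j hk.1 hk.2, mul_zero]
  -- (b) reindexed: even powers
  have keyE : ∀ q : ℕ, ∀ i j : Fin n, (i:ℕ)+q+2 ≤ (j:ℕ) → (A ^ (2*q+2)) i j = 0 := by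
    intro q i j h
    rw [show 2*q+2 = (2*q+1)+1 from rfl, pow_succ, Matrix.mul_apply]
    apply Finset.sum_eq_zero
    intro k _
    by_cases hk : (k:ℕ)+(j:ℕ) = n-1 ∨ (k:ℕ)+(j:ℕ) = n
    · have hj : (j:ℕ) < n := j.isLt
      rw [key q i k (by omega), zero_mul]
    · push_neg at hk
      rw [hAz k j hk.1 hk.2, mul_zero]
  -- (c) odd, reindexed
  have prodO : ∀ q : ℕ, (h : 2*q+1 ≤ n) → (A ^ (2*q+1)) ⟨0, by omega⟩ ⟨n-(q+1), by omega⟩ =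
      ∏ i ∈ Finset.range (2*q+1), a (n-i) := by
    intro q
    induction q with
    | zero =>
      intro h
      rw [show A ^ (2*0+1) = A from pow_one A]
      rw [hAv _ _ (Or.inl (by simp only [Fin.val_mk]; omega))]
      simp only [Fin.val_mk]
      rw [show Nat.dist 0 (n-(0+1)) + 1 = n - 0 from by simp [Nat.dist]; omega]
      exact (Finset.prod_range_one (fun i => a (n - i))).symm
    | succ q ih =>
      intro h
      have he : (A ^ (2*q+2)) ⟨0, by omega⟩ ⟨q+1, by omega⟩ =
          ∏ i ∈ Finset.range (2*q+2), a (n-i) := by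
        rw [show A ^ (2*q+2) = A ^ (2*q+1) * A from pow_succ A (2*q+1), Matrix.mul_apply]
        rw [Finset.sum_eq_single_of_mem (⟨n-(q+1), by omega⟩ : Fin n) (Finset.mem_univ _)]
        · rw [ih (by omega), hAv _ _ (Or.inr (by simp only [Fin.val_mk]; omega))]
          simp only [Fin.val_mk]
          rw [show Nat.dist (n-(q+1)) (q+1) + 1 = n - (2*q+1) from by simp [Nat.dist]; omega]
          exact (Finset.prod_range_succ (fun i => a (n - i)) (2*q+1)).symm
        · intro b _ hb
          by_cases hk : (b:ℕ)+(q+1) = n-1 ∨ (b:ℕ)+(q+1) = n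
          · rcases hk with hk | hk
            · rw [key q _ b (by simp only [Fin.val_mk]; omega), zero_mul]
            · exact absurd (Fin.ext (by simp only [Fin.val_mk]; omega) :
                b = ⟨n-(q+1), by omega⟩) hb
          · push_neg at hk
            rw [hAz b _ (by simpa using hk.1) (by simpa using hk.2), mul_zero]
      rw [show A ^ (2*(q+1)+1) = A ^ (2*q+2) * A from pow_succ A (2*q+2), Matrix.mul_apply]
      rw [Finset.sum_eq_single_of_mem (⟨q+1, by omega⟩ : Fin n) (Finset.mem_univ _)]
      · rw [he, hAv _ _ (Or.inl (by simp only [Fin.val_mk]; omega))]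
        simp only [Fin.val_mk]
        rw [show Nat.dist (q+1) (n-(q+1+1)) + 1 = n - (2*q+2) from by simp [Nat.dist]; omega]
        exact (Finset.prod_range_succ (fun i => a (n - i)) (2*q+2)).symm
      · intro b _ hb
        by_cases hk : (b:ℕ)+(n-(q+1+1)) = n-1 ∨ (b:ℕ)+(n-(q+1+1)) = n
        · rcases hk with hk | hk
          · exact absurd (Fin.ext (by simp only [Fin.val_mk]; omega) :
              b = ⟨q+1, by omega⟩) hb
          · rw [keyE q _ b (by simp only [Fin.val_mk]; omega), zero_mul]
        · push_neg at hk
          rw [hAz b _ (by simpa using hk.1) (by simpa using hk.2), mul_zero]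
  -- (c) even, reindexed
  have prodE : ∀ q : ℕ, (h : 2*q+2 ≤ n) → (A ^ (2*q+2)) ⟨0, by omega⟩ ⟨q+1, by omega⟩ =
      ∏ i ∈ Finset.range (2*q+2), a (n-i) := by
    intro q h
    rw [show A ^ (2*q+2) = A ^ (2*q+1) * A from pow_succ A (2*q+1), Matrix.mul_apply]
    rw [Finset.sum_eq_single_of_mem (⟨n-(q+1), by omega⟩ : Fin n) (Finset.mem_univ _)]
    · rw [prodO q (by omega), hAv _ _ (Or.inr (by simp only [Fin.val_mk]; omega))]
      simp only [Fin.val_mk]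
      rw [show Nat.dist (n-(q+1)) (q+1) + 1 = n - (2*q+1) from by simp [Nat.dist]; omega]
      exact (Finset.prod_range_succ (fun i => a (n - i)) (2*q+1)).symm
    · intro b _ hb
      by_cases hk : (b:ℕ)+(q+1) = n-1 ∨ (b:ℕ)+(q+1) = n
      · rcases hk with hk | hk
        · rw [key q _ b (by simp only [Fin.val_mk]; omega), zero_mul]
        · exact absurd (Fin.ext (by simp only [Fin.val_mk]; omega) :
            b = ⟨n-(q+1), by omega⟩) hb
      · push_neg at hk
        rw [hAz b _ (by simpa using hk.1) (by simpa using hk.2), mul_zero]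
  refine ⟨?_, ?_, ?_, ?_⟩
  · intro q hq i j h
    obtain ⟨q, rfl⟩ : ∃ q', q = q'+1 := ⟨q-1, by omega⟩
    rw [show 2*(q+1)-1 = 2*q+1 by omega]
    exact key q i j (by omega)
  · intro q hq i j h
    obtain ⟨q, rfl⟩ : ∃ q', q = q'+1 := ⟨q-1, by omega⟩
    rw [show 2*(q+1) = 2*q+2 by omega]
    exact keyE q i j (by omega)
  · intro q hq1 hq2
    obtain ⟨q, rfl⟩ : ∃ q', q = q'+1 := ⟨q-1, by omega⟩
    rw [show 2*(q+1)-1 = 2*q+1 by omega]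
    exact prodO q (by omega)
  · intro q hq1 hq2
    obtain ⟨q, rfl⟩ : ∃ q', q = q'+1 := ⟨q-1, by omega⟩
    rw [show 2*(q+1) = 2*q+2 by omega]
    exact prodE q (by omega)
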